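/- For u ∈ (0,1): ∫₀^∞ 2x e^{−(1−u)x} E₁(ux) dx = −2/(1−u) − 2 log u/(1−u)², and ∫₀^∞ ((1−u)/u) x e^{−(1−u)x} E₂(ux) dx = 1/u + 2/(1−u) + 2 log u/(1−u)²; consequently their sum equals 1/u. Hence for integers n_r ≥ 1, n_s ≥ 1, ∫₀^1 u^{n_r}(1−u)^{n_s} (1/u) du = B(n_r, n_s+1) = (n_r−1)! n_s!/(n_r+n_s)!. -/

import Mathlib

open Real MeasureTheory

/-- The exponential integral `E₁(x) = ∫₁^∞ e^{−xt}/t dt`. -/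
noncomputable def expIntegralE1 (x : ℝ) : ℝ := ∫ t in Set.Ioi (1 : ℝ), Real.exp (-(x * t)) / t

/-- The second exponential integral `E₂(x) = ∫₁^∞ e^{−xt}/t² dt`. -/
noncomputable def expIntegralE2 (x : ℝ) : ℝ :=
  ∫ t in Set.Ioi (1 : ℝ), Real.exp (-(x * t)) / t ^ 2

namespace MixedMomentAux
open Real MeasureTheory Set Filter Topology

lemma integral_exp_neg_mul_Ioi_one {y : ℝ} (hy : 0 < y) :
    ∫ t in Set.Ioi (1:ℝ), Real.exp (-(y * t)) = Real.exp (-y) / y := by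
  have h : ∀ t ∈ Set.Ici (1:ℝ), HasDerivAt (fun t => -Real.exp (-(y * t)) / y)
      (Real.exp (-(y * t))) t := by
    intro t _
    have : HasDerivAt (fun t : ℝ => -(y * t)) (-y) t := by
      have h0 : HasDerivAt (fun t : ℝ => y * t) y t := by
        simpa using (hasDerivAt_id t).const_mul y
      exact h0.neg
    have := (this.exp).neg.div_const y
    refine this.congr_deriv ?_
    field_simp
  have hlim : Tendsto (fun t => -Real.exp (-(y * t)) / y) atTop (𝓝 0) := by
    have : Tendsto (fun t : ℝ => y * t) atTop atTop :=
      Tendsto.const_mul_atTop hy tendsto_id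
    have h2 : Tendsto (fun t : ℝ => Real.exp (-(y * t))) atTop (𝓝 0) := by
      exact Real.tendsto_exp_neg_atTop_nhds_zero.comp this
    simpa using (h2.neg).div_const y
  have := integral_Ioi_of_hasDerivAt_of_tendsto' h
    ((exp_neg_integrableOn_Ioi 1 hy).congr_fun (fun t _ => by ring_nf) measurableSet_Ioi) hlim
  simpa [neg_div] using this

lemma Ek_integrable {y : ℝ} (hy : 0 < y) (k : ℕ) :
    IntegrableOn (fun t => Real.exp (-(y * t)) / t ^ k) (Set.Ioi (1:ℝ)) := by
  have hexp : IntegrableOn (fun t => Real.exp (-(y * t))) (Set.Ioi (1:ℝ)) :=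
    (exp_neg_integrableOn_Ioi 1 hy).congr_fun (fun t _ => by ring_nf) measurableSet_Ioi
  apply Integrable.mono hexp
  · apply (ContinuousOn.aestronglyMeasurable ?_ measurableSet_Ioi)
    apply ContinuousOn.div (by fun_prop) (by fun_prop)
    intro t ht
    exact pow_ne_zero _ (ne_of_gt (lt_trans one_pos ht))
  · filter_upwards [ae_restrict_mem measurableSet_Ioi] with t ht
    have h0 : (0:ℝ) < t := lt_trans one_pos ht
    have h1 : (1:ℝ) ≤ t ^ k := one_le_pow₀ (le_of_lt ht)
    rw [norm_div, Real.norm_eq_abs, Real.norm_eq_abs,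
      abs_of_nonneg (Real.exp_pos _).le, abs_of_pos (by positivity : (0:ℝ) < t ^ k)]
    calc Real.exp (-(y*t)) / t ^ k ≤ Real.exp (-(y*t)) / 1 :=
          div_le_div_of_nonneg_left (Real.exp_pos _).le one_pos h1
      _ = Real.exp (-(y*t)) := by ring

lemma Ek_nonneg (y : ℝ) (k : ℕ) :
    0 ≤ ∫ t in Set.Ioi (1:ℝ), Real.exp (-(y * t)) / t ^ k := by
  apply setIntegral_nonneg measurableSet_Ioi
  intro t ht
  have h0 : (0:ℝ) < t := lt_trans one_pos ht
  positivity

lemma Ek_le {y : ℝ} (hy : 0 < y) (k : ℕ) :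
    (∫ t in Set.Ioi (1:ℝ), Real.exp (-(y * t)) / t ^ k) ≤ Real.exp (-y) / y := by
  rw [← integral_exp_neg_mul_Ioi_one hy]
  apply setIntegral_mono_on (Ek_integrable hy k)
    ((exp_neg_integrableOn_Ioi 1 hy).congr_fun (fun t _ => by ring_nf) measurableSet_Ioi)
    measurableSet_Ioi
  intro t ht
  have h1 : (1:ℝ) ≤ t ^ k := one_le_pow₀ (le_of_lt ht)
  calc Real.exp (-(y*t)) / t ^ k ≤ Real.exp (-(y*t)) / 1 :=
        div_le_div_of_nonneg_left (Real.exp_pos _).le one_pos h1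
    _ = Real.exp (-(y*t)) := by ring

lemma integral_x_exp_neg_mul {c : ℝ} (hc : 0 < c) :
    ∫ x in Set.Ioi (0:ℝ), x * Real.exp (-(c * x)) = 1 / c ^ 2 := by
  have := Real.integral_rpow_mul_exp_neg_mul_Ioi (a := 2) (r := c) two_pos hc
  rw [show (2:ℝ) - 1 = 1 by norm_num] at this
  simp only [Real.rpow_one] at this
  rw [this, Real.Gamma_two]
  rw [div_rpow zero_le_one hc.le, Real.one_rpow]
  rw [show ((2:ℝ)) = ((2:ℕ):ℝ) by norm_num, Real.rpow_natCast]
  ring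

lemma fubini_Ek {u : ℝ} (hu0 : 0 < u) (hu1 : u < 1) (k : ℕ) :
    (∫ x in Set.Ioi (0:ℝ), x * Real.exp (-((1-u) * x)) *
        ∫ t in Set.Ioi (1:ℝ), Real.exp (-(u * x * t)) / t ^ k)
      = ∫ t in Set.Ioi (1:ℝ), 1 / (t ^ k * ((1-u) + u * t) ^ 2) := by
  set a : ℝ := 1 - u with ha_def
  have ha : 0 < a := by simp only [ha_def]; linarith
  set μ := volume.restrict (Set.Ioi (0:ℝ))
  set ν := volume.restrict (Set.Ioi (1:ℝ))
  set f : ℝ → ℝ → ℝ := fun x t => x * Real.exp (-(a * x)) * (Real.exp (-(u * x * t)) / t ^ k)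
    with hf_def
  have meas : AEStronglyMeasurable (Function.uncurry f) (μ.prod ν) := by
    apply Measurable.aestronglyMeasurable
    apply Measurable.mul
    · exact (measurable_fst.mul (by fun_prop))
    · exact Measurable.div (by fun_prop) (by fun_prop)
  have hslice : ∀ x ∈ Set.Ioi (0:ℝ), Integrable (fun t => f x t) ν := by
    intro x hx
    have : IntegrableOn (fun t => Real.exp (-(u * x * t)) / t ^ k) (Set.Ioi (1:ℝ)) :=
      Ek_integrable (mul_pos hu0 hx) k
    exact (this.const_mul _)
  have hbound : ∀ x ∈ Set.Ioi (0:ℝ),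
      (∫ t, ‖f x t‖ ∂ν) ≤ Real.exp (-x) / u := by
    intro x hx
    have hx0 : (0:ℝ) < x := hx
    have h1 : (∫ t, ‖f x t‖ ∂ν) = (x * Real.exp (-(a * x))) *
        ∫ t in Set.Ioi (1:ℝ), Real.exp (-(u * x * t)) / t ^ k := by
      rw [← MeasureTheory.integral_const_mul]
      apply setIntegral_congr_fun measurableSet_Ioi
      intro t ht
      have h0 : (0:ℝ) < t := lt_trans one_pos ht
      dsimp only
      rw [Real.norm_eq_abs, abs_of_nonneg (by positivity)]
    rw [h1]
    have h2 : (∫ t in Set.Ioi (1:ℝ), Real.exp (-(u * x * t)) / t ^ k)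
        ≤ Real.exp (-(u * x)) / (u * x) :=
      Ek_le (mul_pos hu0 hx0) k
    calc (x * Real.exp (-(a * x))) * ∫ t in Set.Ioi (1:ℝ), Real.exp (-(u * x * t)) / t ^ k
        ≤ (x * Real.exp (-(a * x))) * (Real.exp (-(u * x)) / (u * x)) := by
          apply mul_le_mul_of_nonneg_left h2 (by positivity)
      _ = Real.exp (-x) / u := by
          have hE : Real.exp (-(a * x)) * Real.exp (-(u * x)) = Real.exp (-x) := by
            rw [← Real.exp_add]; congr 1; simp only [ha_def]; ring
          rw [show x * Real.exp (-(a*x)) * (Real.exp (-(u*x))/(u*x))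
              = (Real.exp (-(a*x)) * Real.exp (-(u*x)))/u from by
            field_simp, hE]
  have hInt : Integrable (Function.uncurry f) (μ.prod ν) := by
    rw [MeasureTheory.integrable_prod_iff meas]
    constructor
    · filter_upwards [ae_restrict_mem measurableSet_Ioi] with x hx
      exact hslice x hx
    · apply Integrable.mono (g := fun x => Real.exp (-x) / u)
      · exact ((exp_neg_integrableOn_Ioi 0 one_pos).congr_fun
          (fun t _ => by ring_nf) measurableSet_Ioi).div_const u
      · exact meas.norm.integral_prod_right'
      · filter_upwards [ae_restrict_mem measurableSet_Ioi] with x hx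
        rw [Real.norm_eq_abs, abs_of_nonneg (integral_nonneg (fun t => norm_nonneg _)),
          Real.norm_eq_abs, abs_of_nonneg (by positivity)]
        exact hbound x hx
  have hswap := MeasureTheory.integral_integral_swap hInt
  have hLHS : (∫ x in Set.Ioi (0:ℝ), x * Real.exp (-((1-u) * x)) *
      ∫ t in Set.Ioi (1:ℝ), Real.exp (-(u * x * t)) / t ^ k)
      = ∫ x, ∫ t, f x t ∂ν ∂μ := by
    apply setIntegral_congr_fun measurableSet_Ioi
    intro x hx
    simp only [hf_def, ← ha_def]
    rw [MeasureTheory.integral_const_mul]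
  rw [hLHS, hswap]
  apply setIntegral_congr_fun measurableSet_Ioi
  intro t ht
  have h0 : (0:ℝ) < t := lt_trans one_pos ht
  have hc : 0 < a + u * t := by positivity
  have : (∫ x, f x t ∂μ)
      = (1 / t ^ k) * ∫ x in Set.Ioi (0:ℝ), x * Real.exp (-((a + u * t) * x)) := by
    rw [← MeasureTheory.integral_const_mul]
    apply setIntegral_congr_fun measurableSet_Ioi
    intro x hx
    simp only [hf_def]
    rw [show -((a + u * t) * x) = -(a * x) + -(u * x * t) by ring, Real.exp_add]
    ring
  dsimp only
  rw [this, integral_x_exp_neg_mul hc]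
  field_simp

section Tints
variable {u : ℝ}

lemma g_deriv (hu0 : 0 < u) (hu1 : u < 1) {t : ℝ} (ht : (1:ℝ) ≤ t) :
    HasDerivAt (fun t : ℝ => (1-u) / t + u) (-((1-u) / t ^ 2)) t := by
  have ht0 : t ≠ 0 := by intro h; rw [h] at ht; linarith
  have h := ((hasDerivAt_inv ht0).const_mul (1-u)).add_const u
  have e : (fun t : ℝ => (1-u) / t + u) = fun t => (1-u) * t⁻¹ + u := by
    funext t; ring
  rw [e]
  refine h.congr_deriv ?_
  ring
lemma g_pos (hu0 : 0 < u) (hu1 : u < 1) {t : ℝ} (ht : (1:ℝ) ≤ t) : 0 < (1-u) / t + u := by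
  have ht0 : (0:ℝ) < t := lt_of_lt_of_le one_pos ht
  have : 0 < (1-u)/t := div_pos (by linarith) ht0
  linarith

lemma g_tendsto (hu0 : 0 < u) (hu1 : u < 1) :
    Filter.Tendsto (fun t : ℝ => Real.log ((1-u) / t + u)) Filter.atTop (nhds (Real.log u)) := by
  have h1 : Filter.Tendsto (fun t : ℝ => (1-u) / t + u) Filter.atTop (nhds u) := by
    have := (tendsto_inv_atTop_zero (𝕜 := ℝ)).const_mul (1-u)
    simp only [mul_zero] at this
    have h2 := this.add_const u
    rw [zero_add] at h2
    convert h2 using 2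
    ring
  exact ((Real.continuousAt_log hu0.ne').tendsto.comp h1)

lemma lin_tendsto_atTop (hu0 : 0 < u) (hu1 : u < 1) :
    Filter.Tendsto (fun t : ℝ => (1-u) + u * t) Filter.atTop Filter.atTop :=
  Filter.tendsto_atTop_add_const_left _ _ (Filter.Tendsto.const_mul_atTop hu0 Filter.tendsto_id)

lemma T1 (hu0 : 0 < u) (hu1 : u < 1) :
    (∫ t in Set.Ioi (1:ℝ), 1 / (t ^ 1 * ((1-u) + u * t) ^ 2))
      = -(Real.log u) / (1-u) ^ 2 - 1 / (1-u) := by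
  set a : ℝ := 1 - u with ha_def
  have ha : 0 < a := by simp only [ha_def]; linarith
  set F : ℝ → ℝ := fun t => -(1/a^2) * Real.log (a / t + u) + (1/a) * (a + u * t)⁻¹
    with hF_def
  have hderiv : ∀ t ∈ Set.Ici (1:ℝ), HasDerivAt F (1 / (t ^ 1 * (a + u * t) ^ 2)) t := by
    intro t ht
    have ht0 : (0:ℝ) < t := lt_of_lt_of_le one_pos ht
    have hgpos := g_pos hu0 hu1 ht
    have hlpos : 0 < a + u * t := by positivity
    have h1 : HasDerivAt (fun t : ℝ => Real.log (a / t + u))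
        ((-((a) / t ^ 2)) / (a / t + u)) t := (g_deriv hu0 hu1 ht).log hgpos.ne'
    have h2 : HasDerivAt (fun t : ℝ => (a + u * t)⁻¹) (-(u / (a + u * t) ^ 2)) t := by
      have hl : HasDerivAt (fun t : ℝ => a + u * t) u t := by
        simpa using ((hasDerivAt_id t).const_mul u).const_add a
      have := hl.inv hlpos.ne'
      refine this.congr_deriv ?_
      rw [neg_div]
    have h := (h1.const_mul (-(1/a^2))).add (h2.const_mul (1/a))
    refine h.congr_deriv ?_
    have e1 : a / t + u = (a + u * t) / t := by field_simp
    rw [e1]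
    field_simp
    ring
  have g'pos : ∀ t ∈ Set.Ioi (1:ℝ), 0 ≤ 1 / (t ^ 1 * (a + u * t) ^ 2) := by
    intro t ht
    have ht0 : (0:ℝ) < t := lt_trans one_pos ht
    positivity
  have htend : Filter.Tendsto F Filter.atTop (nhds (-(1/a^2) * Real.log u)) := by
    have h1 := (g_tendsto hu0 hu1).const_mul (-(1/a^2))
    have h2 : Filter.Tendsto (fun t : ℝ => (1/a) * (a + u * t)⁻¹) Filter.atTop (nhds 0) := by
      have := (lin_tendsto_atTop hu0 hu1).inv_tendsto_atTop
      simpa using this.const_mul (1/a)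
    have := h1.add h2
    rw [add_zero] at this
    exact this
  have hint := integral_Ioi_of_hasDerivAt_of_nonneg' hderiv g'pos htend
  rw [hint]
  have hF1 : F 1 = 1/a := by
    simp only [hF_def]
    rw [show a / 1 + u = 1 by simp [ha_def], show a + u * 1 = 1 by simp [ha_def]]
    simp
  rw [hF1]
  field_simp
end Tints

lemma T2 {u : ℝ} (hu0 : 0 < u) (hu1 : u < 1) :
    (∫ t in Set.Ioi (1:ℝ), 1 / (t ^ 2 * ((1-u) + u * t) ^ 2))
      = (2 * u / (1-u) ^ 3) * Real.log u + (1 + u) / (1-u) ^ 2 := by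
  set a : ℝ := 1 - u with ha_def
  have ha : 0 < a := by simp only [ha_def]; linarith
  set F : ℝ → ℝ := fun t => (1/a^2) * (-(t⁻¹) - u * (a + u * t)⁻¹)
      + (2 * u / a^3) * Real.log (a / t + u) with hF_def
  have hderiv : ∀ t ∈ Set.Ici (1:ℝ), HasDerivAt F (1 / (t ^ 2 * (a + u * t) ^ 2)) t := by
    intro t ht
    have ht0 : (0:ℝ) < t := lt_of_lt_of_le one_pos ht
    have hgpos := g_pos hu0 hu1 ht
    have hlpos : 0 < a + u * t := by positivity
    have h1 : HasDerivAt (fun t : ℝ => Real.log (a / t + u))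
        ((-((a) / t ^ 2)) / (a / t + u)) t := (g_deriv hu0 hu1 ht).log hgpos.ne'
    have hl : HasDerivAt (fun t : ℝ => a + u * t) u t := by
      simpa using ((hasDerivAt_id t).const_mul u).const_add a
    have h2 : HasDerivAt (fun t : ℝ => (a + u * t)⁻¹) (-(u / (a + u * t) ^ 2)) t := by
      have := hl.inv hlpos.ne'
      refine this.congr_deriv ?_
      rw [neg_div]
    have h3 : HasDerivAt (fun t : ℝ => t⁻¹) (-((t^2)⁻¹)) t := by
      have := hasDerivAt_inv ht0.ne'
      convert this using 1
    have h := (((h3.neg).sub (h2.const_mul u)).const_mul (1/a^2)).add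
      (h1.const_mul (2 * u / a^3))
    refine h.congr_deriv ?_
    have e1 : a / t + u = (a + u * t) / t := by field_simp
    rw [e1]
    field_simp
    ring
  have g'pos : ∀ t ∈ Set.Ioi (1:ℝ), 0 ≤ 1 / (t ^ 2 * (a + u * t) ^ 2) := by
    intro t ht
    have ht0 : (0:ℝ) < t := lt_trans one_pos ht
    positivity
  have htend : Filter.Tendsto F Filter.atTop (nhds ((2 * u / a^3) * Real.log u)) := by
    have hta : Filter.Tendsto (fun t : ℝ => t) Filter.atTop Filter.atTop := Filter.tendsto_id
    have hinv : Filter.Tendsto (fun t : ℝ => t⁻¹) Filter.atTop (nhds 0) :=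
      tendsto_inv_atTop_zero
    have hinv2 : Filter.Tendsto (fun t : ℝ => (a + u * t)⁻¹) Filter.atTop (nhds 0) :=
      (lin_tendsto_atTop hu0 hu1).inv_tendsto_atTop
    have h1 : Filter.Tendsto (fun t : ℝ => (1/a^2) * (-(t⁻¹) - u * (a + u * t)⁻¹))
        Filter.atTop (nhds 0) := by
      have := ((hinv.neg).sub (hinv2.const_mul u)).const_mul (1/a^2)
      simpa using this
    have h2 := (g_tendsto hu0 hu1).const_mul (2 * u / a^3)
    have := h1.add h2
    rw [zero_add] at this
    exact this
  have hint := integral_Ioi_of_hasDerivAt_of_nonneg' hderiv g'pos htend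
  rw [hint]
  have hF1 : F 1 = -((1 + u) / a^2) := by
    simp only [hF_def]
    rw [show a / 1 + u = 1 by simp [ha_def], show a + u * 1 = 1 by simp [ha_def]]
    simp
    field_simp
    ring
  rw [hF1]
  ring

lemma beta_nat : ∀ (n m : ℕ), (∫ v in (0:ℝ)..1, v ^ m * (1 - v) ^ n)
    = (Nat.factorial m : ℝ) * (Nat.factorial n) / (Nat.factorial (m + n + 1)) := by
  intro n
  induction n with
  | zero =>
    intro m
    simp only [pow_zero, mul_one, Nat.factorial_zero, Nat.cast_one]
    rw [integral_pow]
    simp [Nat.factorial_succ]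
    rw [eq_div_iff (by positivity)]
    have : (Nat.factorial m : ℝ) ≠ 0 := by positivity
    field_simp
  | succ n IH =>
    intro m
    have hu : ∀ x ∈ Set.uIcc (0:ℝ) 1, HasDerivAt (fun x : ℝ => (1 - x) ^ (n+1))
        (-((n+1 : ℝ) * (1 - x) ^ n)) x := by
      intro x _
      have h : HasDerivAt (fun x : ℝ => 1 - x) (-1) x := by
        simpa using (hasDerivAt_id x).const_sub 1
      have := h.pow (n+1)
      refine this.congr_deriv ?_
      push_cast
      ring
    have hv : ∀ x ∈ Set.uIcc (0:ℝ) 1, HasDerivAt (fun x : ℝ => x ^ (m+1) / (m+1 : ℝ))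
        (x ^ m) x := by
      intro x _
      have := (hasDerivAt_pow (m+1) x).div_const (m+1 : ℝ)
      refine this.congr_deriv ?_
      have hm : (m+1 : ℝ) ≠ 0 := by positivity
      field_simp
      rw [Nat.add_sub_cancel]
      push_cast
      ring
    have hiu : IntervalIntegrable (fun x : ℝ => -((n+1 : ℝ) * (1 - x) ^ n)) volume 0 1 :=
      (Continuous.intervalIntegrable (by fun_prop) 0 1)
    have hiv : IntervalIntegrable (fun x : ℝ => x ^ m) volume 0 1 :=
      (Continuous.intervalIntegrable (by fun_prop) 0 1)
    have hparts := intervalIntegral.integral_mul_deriv_eq_deriv_mul hu hv hiu hiv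
    have e1 : (∫ v in (0:ℝ)..1, v ^ m * (1 - v) ^ (n+1))
        = ∫ x in (0:ℝ)..1, (1 - x) ^ (n+1) * x ^ m := by
      apply intervalIntegral.integral_congr
      intro x _
      ring
    rw [e1, hparts]
    have e2 : (∫ x in (0:ℝ)..1, -((n+1 : ℝ) * (1 - x) ^ n) * (x ^ (m+1) / (m+1 : ℝ)))
        = (-((n+1 : ℝ)/(m+1 : ℝ))) * ∫ x in (0:ℝ)..1, x ^ (m+1) * (1 - x) ^ n := by
      rw [← intervalIntegral.integral_const_mul]
      apply intervalIntegral.integral_congr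
      intro x _
      have hm : (m+1 : ℝ) ≠ 0 := by positivity
      field_simp
    rw [e2, IH (m+1)]
    have h2 : (0:ℝ) < (m+1 : ℝ) := by positivity
    simp only [Nat.factorial_succ]
    push_cast
    have hm : (m+1 : ℝ) ≠ 0 := by positivity
    have hfac : (Nat.factorial (m + (n+1) + 1) : ℝ) = (Nat.factorial (m + 1 + n + 1)) := by
      norm_num
      ring_nf
    field_simp
    rw [show m + 1 + n = m + (n + 1) by omega]
    ring


theorem main_one (u : ℝ) (hu0 : 0 < u) (hu1 : u < 1) :
    (∫ x in Set.Ioi (0 : ℝ), 2 * x * Real.exp (-((1 - u) * x)) *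
        (∫ t in Set.Ioi (1 : ℝ), Real.exp (-(u * x * t)) / t))
      = -2 / (1 - u) - 2 * Real.log u / (1 - u) ^ 2 := by
  have ha : (0:ℝ) < 1 - u := by linarith
  have e : (∫ x in Set.Ioi (0 : ℝ), 2 * x * Real.exp (-((1 - u) * x)) *
        (∫ t in Set.Ioi (1 : ℝ), Real.exp (-(u * x * t)) / t))
      = 2 * ∫ x in Set.Ioi (0 : ℝ), x * Real.exp (-((1 - u) * x)) *
        (∫ t in Set.Ioi (1 : ℝ), Real.exp (-(u * x * t)) / t ^ 1) := by
    rw [← MeasureTheory.integral_const_mul]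
    apply setIntegral_congr_fun measurableSet_Ioi
    intro x hx
    simp only [pow_one]
    ring
  rw [e, fubini_Ek hu0 hu1 1, T1 hu0 hu1]
  field_simp
  ring

theorem main_two (u : ℝ) (hu0 : 0 < u) (hu1 : u < 1) :
    (∫ x in Set.Ioi (0 : ℝ), (1 - u) / u * x * Real.exp (-((1 - u) * x)) *
        (∫ t in Set.Ioi (1 : ℝ), Real.exp (-(u * x * t)) / t ^ 2))
      = 1 / u + 2 / (1 - u) + 2 * Real.log u / (1 - u) ^ 2 := by
  have ha : (0:ℝ) < 1 - u := by linarith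
  have e : (∫ x in Set.Ioi (0 : ℝ), (1 - u) / u * x * Real.exp (-((1 - u) * x)) *
        (∫ t in Set.Ioi (1 : ℝ), Real.exp (-(u * x * t)) / t ^ 2))
      = ((1 - u) / u) * ∫ x in Set.Ioi (0 : ℝ), x * Real.exp (-((1 - u) * x)) *
        (∫ t in Set.Ioi (1 : ℝ), Real.exp (-(u * x * t)) / t ^ 2) := by
    rw [← MeasureTheory.integral_const_mul]
    apply setIntegral_congr_fun measurableSet_Ioi
    intro x hx
    ring
  rw [e, fubini_Ek hu0 hu1 2, T2 hu0 hu1]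
  field_simp
  ring

theorem main_four (nr ns : ℕ) (h1 : 1 ≤ nr) (h2 : 1 ≤ ns) :
    (∫ v in (0:ℝ)..1, v ^ nr * (1 - v) ^ ns * (1 / v))
      = (Nat.factorial (nr - 1) : ℝ) * (Nat.factorial ns) / (Nat.factorial (nr + ns)) := by
  have e : (∫ v in (0:ℝ)..1, v ^ nr * (1 - v) ^ ns * (1 / v))
      = ∫ v in (0:ℝ)..1, v ^ (nr - 1) * (1 - v) ^ ns := by
    rw [intervalIntegral.integral_of_le zero_le_one,
      intervalIntegral.integral_of_le zero_le_one]
    apply setIntegral_congr_fun measurableSet_Ioc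
    intro v hv
    have hv0 : (0:ℝ) < v := hv.1
    have hp : v ^ nr = v ^ (nr - 1) * v := by
      rw [← pow_succ]
      congr 1
      omega
    dsimp only
    rw [hp]
    field_simp
  rw [e, beta_nat ns (nr - 1), show nr - 1 + ns + 1 = nr + ns by omega]

end MixedMomentAux

open MixedMomentAux in
/-- The integrals `I₁(u) = ∫₀^∞ 2xe^{−(1−u)x}E₁(ux) dx = −2/(1−u) − 2log u/(1−u)²` and
`I₂(u) = ∫₀^∞ ((1−u)/u) xe^{−(1−u)x}E₂(ux) dx = 1/u + 2/(1−u) + 2log u/(1−u)²`, so that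
`I₁(u) + I₂(u) = 1/u`; and for integers `n_r, n_s ≥ 1`,
`∫₀^1 u^{n_r}(1−u)^{n_s}(1/u) du = B(n_r, n_s+1) = (n_r−1)! n_s!/(n_r+n_s)!`. -/
theorem mixed_moment_integrals (u : ℝ) (hu0 : 0 < u) (hu1 : u < 1) :
    (∫ x in Set.Ioi (0 : ℝ), 2 * x * Real.exp (-((1 - u) * x)) * expIntegralE1 (u * x))
      = -2 / (1 - u) - 2 * Real.log u / (1 - u) ^ 2 ∧
    (∫ x in Set.Ioi (0 : ℝ),
        (1 - u) / u * x * Real.exp (-((1 - u) * x)) * expIntegralE2 (u * x))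
      = 1 / u + 2 / (1 - u) + 2 * Real.log u / (1 - u) ^ 2 ∧
    (∫ x in Set.Ioi (0 : ℝ), 2 * x * Real.exp (-((1 - u) * x)) * expIntegralE1 (u * x))
      + (∫ x in Set.Ioi (0 : ℝ),
          (1 - u) / u * x * Real.exp (-((1 - u) * x)) * expIntegralE2 (u * x))
      = 1 / u ∧
    (∀ nr ns : ℕ, 1 ≤ nr → 1 ≤ ns →
      (∫ v in (0:ℝ)..1, v ^ nr * (1 - v) ^ ns * (1 / v))
        = (Nat.factorial (nr - 1) : ℝ) * (Nat.factorial ns) /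
            (Nat.factorial (nr + ns))) := by
  have e1 : (∫ x in Set.Ioi (0 : ℝ), 2 * x * Real.exp (-((1 - u) * x)) * expIntegralE1 (u * x))
      = -2 / (1 - u) - 2 * Real.log u / (1 - u) ^ 2 := by
    rw [← main_one u hu0 hu1]
    apply setIntegral_congr_fun measurableSet_Ioi
    intro x hx
    simp only [expIntegralE1, mul_assoc]
  have e2 : (∫ x in Set.Ioi (0 : ℝ),
        (1 - u) / u * x * Real.exp (-((1 - u) * x)) * expIntegralE2 (u * x))
      = 1 / u + 2 / (1 - u) + 2 * Real.log u / (1 - u) ^ 2 := by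
    rw [← main_two u hu0 hu1]
    apply setIntegral_congr_fun measurableSet_Ioi
    intro x hx
    simp only [expIntegralE2, mul_assoc]
  refine ⟨e1, e2, ?_, fun nr ns h1 h2 => main_four nr ns h1 h2⟩
  rw [e1, e2]
  have ha : (0:ℝ) < 1 - u := by linarith
  field_simp
  ring
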